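/- With S(z,v,w) = 2zw(2 + (1-w)z)/(4 + w(v-1)z^2 - 2z(v+w)): the coefficient of z^n in ∂_v S(z,1,w)|_{w=1} equals n/4 for n ≥ 2, and the coefficient of z^n in ∂_w S(z,v,1)|_{v=1} equals n/2 for n ≥ 2. -/

import Mathlib

open PowerSeries

/-- `z` as a power series over polynomials in `v = X 0` and `w = X 1`. -/
noncomputable def Zq : PowerSeries (MvPolynomial (Fin 2) ℚ) := PowerSeries.X

/-- `v` as a power series over polynomials in `v, w`. -/
noncomputable def Vq : PowerSeries (MvPolynomial (Fin 2) ℚ) := PowerSeries.C (MvPolynomial.X 0 : MvPolynomial (Fin 2) ℚ)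

/-- `w` as a power series over polynomials in `v, w`. -/
noncomputable def Wq : PowerSeries (MvPolynomial (Fin 2) ℚ) := PowerSeries.C (MvPolynomial.X 1 : MvPolynomial (Fin 2) ℚ)

namespace ShelfAux

noncomputable def ee : MvPolynomial (Fin 2) ℚ →+* ℚ := MvPolynomial.eval (fun _ => (1:ℚ))

noncomputable def dv (p : MvPolynomial (Fin 2) ℚ) : ℚ := ee (MvPolynomial.pderiv 0 p)
noncomputable def dw (p : MvPolynomial (Fin 2) ℚ) : ℚ := ee (MvPolynomial.pderiv 1 p)

lemma dv_mul (p q : MvPolynomial (Fin 2) ℚ) :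
    dv (p * q) = dv p * ee q + ee p * dv q := by
  simp only [dv, MvPolynomial.pderiv_mul, map_add, map_mul]

lemma dw_mul (p q : MvPolynomial (Fin 2) ℚ) :
    dw (p * q) = dw p * ee q + ee p * dw q := by
  simp only [dw, MvPolynomial.pderiv_mul, map_add, map_mul]

lemma dv_add (p q : MvPolynomial (Fin 2) ℚ) : dv (p + q) = dv p + dv q := by simp [dv]
lemma dw_add (p q : MvPolynomial (Fin 2) ℚ) : dw (p + q) = dw p + dw q := by simp [dw]
lemma dv_zero : dv 0 = 0 := by simp [dv]
lemma dw_zero : dw 0 = 0 := by simp [dw]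

lemma ee_four : ee (4 : MvPolynomial (Fin 2) ℚ) = 4 := by simp [ee]
lemma dv_four : dv (4 : MvPolynomial (Fin 2) ℚ) = 0 := by
  rw [show (4 : MvPolynomial (Fin 2) ℚ) = MvPolynomial.C (4:ℚ) from
    (map_ofNat (MvPolynomial.C : ℚ →+* MvPolynomial (Fin 2) ℚ) 4).symm]
  simp [dv, MvPolynomial.pderiv_C]
lemma dw_four : dw (4 : MvPolynomial (Fin 2) ℚ) = 0 := by
  rw [show (4 : MvPolynomial (Fin 2) ℚ) = MvPolynomial.C (4:ℚ) from
    (map_ofNat (MvPolynomial.C : ℚ →+* MvPolynomial (Fin 2) ℚ) 4).symm]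
  simp [dw, MvPolynomial.pderiv_C]

end ShelfAux

/-- With `S(z,v,w) = 2zw(2 + (1-w)z)/(4 + w(v-1)z² - 2z(v+w))` (characterized by
clearing the denominator, whose constant term `4` is invertible): the coefficient of
`zⁿ` in `∂_v S|_{v=w=1}` equals `n/4` and that of `∂_w S|_{v=w=1}` equals `n/2`, for
all `n ≥ 2` (i.e. `E(L_n) = n/4` and `E(C_n) = n/2`). -/
theorem shelf_refined_expectations (S : PowerSeries (MvPolynomial (Fin 2) ℚ))
    (hS : S * (4 + Wq * (Vq - 1) * Zq ^ 2 - 2 * Zq * (Vq + Wq))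
        = 2 * Zq * Wq * (2 + (1 - Wq) * Zq)) :
    ∀ n : ℕ, 2 ≤ n →
      MvPolynomial.eval (fun _ => (1 : ℚ))
          (MvPolynomial.pderiv 0 (PowerSeries.coeff n S)) = n / 4 ∧
      MvPolynomial.eval (fun _ => (1 : ℚ))
          (MvPolynomial.pderiv 1 (PowerSeries.coeff n S)) = n / 2 := by
  classical
  open ShelfAux MvPolynomial in
  set v : MvPolynomial (Fin 2) ℚ := MvPolynomial.X 0 with hv
  set w : MvPolynomial (Fin 2) ℚ := MvPolynomial.X 1 with hw
  obtain ⟨q1, hq1⟩ : ∃ q1 : MvPolynomial (Fin 2) ℚ, q1 = MvPolynomial.C 2 * (v + w) := ⟨_, rfl⟩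
  obtain ⟨q2, hq2⟩ : ∃ q2 : MvPolynomial (Fin 2) ℚ, q2 = w * (v - 1) := ⟨_, rfl⟩
  obtain ⟨r1, hr1⟩ : ∃ r1 : MvPolynomial (Fin 2) ℚ, r1 = MvPolynomial.C 4 * w := ⟨_, rfl⟩
  obtain ⟨r2, hr2⟩ : ∃ r2 : MvPolynomial (Fin 2) ℚ, r2 = MvPolynomial.C 2 * (w * (1 - w)) := ⟨_, rfl⟩
  -- rearranged functional equation
  have hS' : S * PowerSeries.C 4 + S * PowerSeries.X ^ 2 * PowerSeries.C q2
      = PowerSeries.X * PowerSeries.C r1 + PowerSeries.X ^ 2 * PowerSeries.C r2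
        + S * PowerSeries.X * PowerSeries.C q1 := by
    simp only [Zq, Vq, Wq] at hS
    simp only [hq1, hq2, hr1, hr2, hv, hw, map_mul, map_add, map_sub, map_one, map_ofNat]
    linear_combination hS
  -- the coefficient-wise equation
  have key : ∀ n : ℕ,
      (PowerSeries.coeff n S) * 4 + (PowerSeries.coeff n (S * PowerSeries.X ^ 2)) * q2
      = (PowerSeries.coeff n (PowerSeries.X : PowerSeries (MvPolynomial (Fin 2) ℚ))) * r1
        + (PowerSeries.coeff n ((PowerSeries.X : PowerSeries (MvPolynomial (Fin 2) ℚ)) ^ 2)) * r2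
        + (PowerSeries.coeff n (S * PowerSeries.X)) * q1 := by
    intro n
    have := congrArg (PowerSeries.coeff n) hS'
    simpa [PowerSeries.coeff_mul_C] using this
  set s : ℕ → MvPolynomial (Fin 2) ℚ := fun n => PowerSeries.coeff n S with hs
  set a : ℕ → ℚ := fun n => ShelfAux.ee (s n) with ha
  set b : ℕ → ℚ := fun n => ShelfAux.dv (s n) with hb
  set c : ℕ → ℚ := fun n => ShelfAux.dw (s n) with hc
  -- constants
  have eq1 : ShelfAux.ee q1 = 4 := by simp [hq1, hv, hw, ShelfAux.ee]; norm_num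
  have eq2 : ShelfAux.ee q2 = 0 := by simp [hq2, hv, hw, ShelfAux.ee]
  have er1 : ShelfAux.ee r1 = 4 := by simp [hr1, hw, ShelfAux.ee]
  have er2 : ShelfAux.ee r2 = 0 := by simp [hr2, hw, ShelfAux.ee]
  have dvq1 : ShelfAux.dv q1 = 2 := by
    simp [hq1, hv, hw, ShelfAux.dv, ShelfAux.ee, pderiv_C_mul, pderiv_X]
  have dvq2 : ShelfAux.dv q2 = 1 := by
    simp [hq2, hv, hw, ShelfAux.dv, ShelfAux.ee, pderiv_mul, pderiv_X]
  have dvr1 : ShelfAux.dv r1 = 0 := by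
    simp [hr1, hw, ShelfAux.dv, ShelfAux.ee, pderiv_C_mul, pderiv_X]
  have dvr2 : ShelfAux.dv r2 = 0 := by
    simp [hr2, hw, ShelfAux.dv, ShelfAux.ee, pderiv_C_mul, pderiv_mul, pderiv_X]
  have dwq1 : ShelfAux.dw q1 = 2 := by
    simp [hq1, hv, hw, ShelfAux.dw, ShelfAux.ee, pderiv_C_mul, pderiv_X]
  have dwq2 : ShelfAux.dw q2 = 0 := by
    simp [hq2, hv, hw, ShelfAux.dw, ShelfAux.ee, pderiv_mul, pderiv_X]
  have dwr1 : ShelfAux.dw r1 = 4 := by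
    simp [hr1, hw, ShelfAux.dw, ShelfAux.ee, pderiv_C_mul, pderiv_X]
  have dwr2 : ShelfAux.dw r2 = -2 := by
    simp [hr2, hw, ShelfAux.dw, ShelfAux.ee, pderiv_C_mul, pderiv_mul, pderiv_X]
  -- the three base-case coefficient equations and the recurrence
  have E0 : s 0 * 4 = 0 := by
    have := key 0
    simpa [hs, PowerSeries.coeff_zero_mul_X, PowerSeries.coeff_mul_X_pow',
      PowerSeries.coeff_X, PowerSeries.coeff_X_pow] using this
  have E1 : s 1 * 4 = r1 + s 0 * q1 := by
    have := key 1
    simpa [hs, PowerSeries.coeff_succ_mul_X, PowerSeries.coeff_mul_X_pow',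
      PowerSeries.coeff_X, PowerSeries.coeff_X_pow] using this
  have E2 : s 2 * 4 + s 0 * q2 = r2 + s 1 * q1 := by
    have := key 2
    simpa [hs, show (2:ℕ) = 1 + 1 from rfl, PowerSeries.coeff_succ_mul_X,
      PowerSeries.coeff_mul_X_pow', PowerSeries.coeff_X, PowerSeries.coeff_X_pow] using this
  have E3 : ∀ n : ℕ, s (n + 3) * 4 + s (n + 1) * q2 = s (n + 2) * q1 := by
    intro n
    have := key (n + 3)
    have h1 : n + 3 = (n + 2) + 1 := by ring
    have h2 : n + 3 - 2 = n + 1 := by omega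
    simpa [hs, h1, PowerSeries.coeff_succ_mul_X, PowerSeries.coeff_mul_X_pow', h2,
      PowerSeries.coeff_X, PowerSeries.coeff_X_pow] using this
  -- scalar consequences via `ee`
  have A0 : ShelfAux.ee (s 0) = 0 := by
    have := congrArg ShelfAux.ee E0
    simp only [map_mul, ShelfAux.ee_four, map_zero] at this
    linarith [this]
  have A1 : ShelfAux.ee (s 1) = 1 := by
    have := congrArg ShelfAux.ee E1
    simp only [map_mul, map_add, ShelfAux.ee_four, er1, eq1] at this
    rw [A0] at this; linarith [this]
  have A2 : ShelfAux.ee (s 2) = 1 := by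
    have := congrArg ShelfAux.ee E2
    simp only [map_mul, map_add, ShelfAux.ee_four, er2, eq1, eq2] at this
    rw [A0, A1] at this; linarith [this]
  have AR : ∀ n : ℕ, ShelfAux.ee (s (n + 3)) = ShelfAux.ee (s (n + 2)) := by
    intro n
    have := congrArg ShelfAux.ee (E3 n)
    simp only [map_mul, map_add, ShelfAux.ee_four, eq1, eq2] at this
    linarith [this]
  have A2n : ∀ n : ℕ, ShelfAux.ee (s (n + 2)) = 1 := by
    intro n
    induction n with
    | zero => exact A2
    | succ k ih => rw [show k + 1 + 2 = k + 3 from rfl, AR k]; exact ih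
  have A1n : ∀ n : ℕ, ShelfAux.ee (s (n + 1)) = 1 := by
    intro n
    cases n with
    | zero => exact A1
    | succ k => exact A2n k
  -- scalar consequences via `dv`
  have B0 : ShelfAux.dv (s 0) = 0 := by
    have := congrArg ShelfAux.dv E0
    rw [ShelfAux.dv_mul, ShelfAux.dv_zero, ShelfAux.dv_four, ShelfAux.ee_four] at this
    linarith [this]
  have B1 : ShelfAux.dv (s 1) = 0 := by
    have := congrArg ShelfAux.dv E1
    rw [ShelfAux.dv_mul, ShelfAux.dv_add, ShelfAux.dv_mul, ShelfAux.dv_four,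
      ShelfAux.ee_four, dvr1, dvq1, eq1, A0, B0] at this
    linarith [this]
  have B2 : ShelfAux.dv (s 2) = 2 / 4 := by
    have := congrArg ShelfAux.dv E2
    rw [ShelfAux.dv_add, ShelfAux.dv_add, ShelfAux.dv_mul, ShelfAux.dv_mul, ShelfAux.dv_mul,
      ShelfAux.dv_four, ShelfAux.ee_four, dvr2, dvq1, dvq2, eq1, eq2, A0, A1, B0, B1] at this
    linarith [this]
  have BR : ∀ n : ℕ, ShelfAux.dv (s (n + 3)) = ShelfAux.dv (s (n + 2)) + 1 / 4 := by
    intro n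
    have := congrArg ShelfAux.dv (E3 n)
    rw [ShelfAux.dv_add, ShelfAux.dv_mul, ShelfAux.dv_mul, ShelfAux.dv_mul,
      ShelfAux.dv_four, ShelfAux.ee_four, dvq1, dvq2, eq1, eq2, A1n n, A2n n] at this
    linarith [this]
  have B2n : ∀ n : ℕ, ShelfAux.dv (s (n + 2)) = (n + 2 : ℕ) / 4 := by
    intro n
    induction n with
    | zero => simpa using B2
    | succ k ih =>
      rw [show k + 1 + 2 = k + 3 from rfl, BR k, ih]
      push_cast; ring
  -- scalar consequences via `dw`
  have C0 : ShelfAux.dw (s 0) = 0 := by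
    have := congrArg ShelfAux.dw E0
    rw [ShelfAux.dw_mul, ShelfAux.dw_zero, ShelfAux.dw_four, ShelfAux.ee_four] at this
    linarith [this]
  have C1 : ShelfAux.dw (s 1) = 1 := by
    have := congrArg ShelfAux.dw E1
    rw [ShelfAux.dw_mul, ShelfAux.dw_add, ShelfAux.dw_mul, ShelfAux.dw_four,
      ShelfAux.ee_four, dwr1, dwq1, eq1, A0, C0] at this
    linarith [this]
  have C2 : ShelfAux.dw (s 2) = 1 := by
    have := congrArg ShelfAux.dw E2
    rw [ShelfAux.dw_add, ShelfAux.dw_add, ShelfAux.dw_mul, ShelfAux.dw_mul, ShelfAux.dw_mul,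
      ShelfAux.dw_four, ShelfAux.ee_four, dwr2, dwq1, dwq2, eq1, eq2, A0, A1, C0, C1] at this
    linarith [this]
  have CR : ∀ n : ℕ, ShelfAux.dw (s (n + 3)) = ShelfAux.dw (s (n + 2)) + 1 / 2 := by
    intro n
    have := congrArg ShelfAux.dw (E3 n)
    rw [ShelfAux.dw_add, ShelfAux.dw_mul, ShelfAux.dw_mul, ShelfAux.dw_mul,
      ShelfAux.dw_four, ShelfAux.ee_four, dwq1, dwq2, eq1, eq2, A1n n, A2n n] at this
    linarith [this]
  have C2n : ∀ n : ℕ, ShelfAux.dw (s (n + 2)) = (n + 2 : ℕ) / 2 := by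
    intro n
    induction n with
    | zero => simpa using C2
    | succ k ih =>
      rw [show k + 1 + 2 = k + 3 from rfl, CR k, ih]
      push_cast; ring
  -- conclusion
  intro n hn
  obtain ⟨m, rfl⟩ := Nat.exists_eq_add_of_le hn
  constructor
  · have := B2n m
    rw [show m + 2 = 2 + m by ring] at this
    simpa [ShelfAux.dv, ShelfAux.ee, hs] using this
  · have := C2n m
    rw [show m + 2 = 2 + m by ring] at this
    simpa [ShelfAux.dw, ShelfAux.ee, hs] using this
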